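/- Let c₁, c₂, c₃ ≥ 0 and T > 0. Let u : [0, T] → ℝ be continuous with u(t) > 0 for all t ∈ [0, T], differentiable on (0, T), and suppose that for all t ∈ (0, T): u'(t) ≥ −c₁·u(t) − (c₂/√t + c₃)·√(u(t)). Then for every t ∈ [0, T]: √(u(t)) ≥ √(u(0))·e^{−c₁ t/2} − c₂·√t − (c₃/2)·t. -/

import Mathlib

/-- Differential-inequality core of part (1) of Lemma 3.2:
from `u' ≥ -c₁ u - (c₂/√t + c₃)√u` deduce
`√(u t) ≥ √(u 0) e^{-c₁ t/2} - c₂ √t - (c₃/2) t`. -/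
theorem sqrt_lower_bound_of_deriv_ineq
    (c₁ c₂ c₃ T : ℝ) (hc₁ : 0 ≤ c₁) (hc₂ : 0 ≤ c₂) (hc₃ : 0 ≤ c₃) (hT : 0 < T)
    (u u' : ℝ → ℝ)
    (hu_cont : ContinuousOn u (Set.Icc 0 T))
    (hu_pos : ∀ t ∈ Set.Icc 0 T, 0 < u t)
    (hu_deriv : ∀ t ∈ Set.Ioo 0 T, HasDerivAt u (u' t) t)
    (hu_ineq : ∀ t ∈ Set.Ioo 0 T,
      -c₁ * u t - (c₂ / Real.sqrt t + c₃) * Real.sqrt (u t) ≤ u' t) :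
    ∀ t ∈ Set.Icc 0 T,
      Real.sqrt (u 0) * Real.exp (-c₁ * t / 2) - c₂ * Real.sqrt t - c₃ / 2 * t
        ≤ Real.sqrt (u t) := by
  set F : ℝ → ℝ := fun t =>
    Real.exp (c₁ * t / 2) * (Real.sqrt (u t) + c₂ * Real.sqrt t + c₃ / 2 * t) with hF
  set F' : ℝ → ℝ := fun t =>
    Real.exp (c₁ * t / 2) * (c₁ / 2) *
        (Real.sqrt (u t) + c₂ * Real.sqrt t + c₃ / 2 * t) +
      Real.exp (c₁ * t / 2) *
        (u' t / (2 * Real.sqrt (u t)) + c₂ * (1 / (2 * Real.sqrt t)) + c₃ / 2) with hF'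
  have hFd : ∀ t ∈ Set.Ioo 0 T, HasDerivAt F (F' t) t := by
    intro t ht
    have ht0 : 0 < t := ht.1
    have htT : t ∈ Set.Icc 0 T := ⟨le_of_lt ht0, le_of_lt ht.2⟩
    have hut : 0 < u t := hu_pos t htT
    have hexp : HasDerivAt (fun s => Real.exp (c₁ * s / 2))
        (Real.exp (c₁ * t / 2) * (c₁ / 2)) t := by
      have h1 : HasDerivAt (fun s : ℝ => c₁ * s / 2) (c₁ / 2) t := by
        simpa using ((hasDerivAt_id t).const_mul c₁).div_const 2
      exact h1.exp
    have hsq : HasDerivAt (fun s => Real.sqrt (u s)) (u' t / (2 * Real.sqrt (u t))) t := by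
      have := (Real.hasDerivAt_sqrt (ne_of_gt hut)).comp t (hu_deriv t ht)
      simpa [Function.comp_def, div_eq_mul_inv, mul_comm] using this
    have hst : HasDerivAt (fun s => c₂ * Real.sqrt s) (c₂ * (1 / (2 * Real.sqrt t))) t :=
      (Real.hasDerivAt_sqrt (ne_of_gt ht0)).const_mul c₂
    have hlin : HasDerivAt (fun s : ℝ => c₃ / 2 * s) (c₃ / 2) t := by
      simpa using (hasDerivAt_id t).const_mul (c₃ / 2)
    exact hexp.mul ((hsq.add hst).add hlin)
  have hFmono : MonotoneOn F (Set.Icc 0 T) := by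
    apply monotoneOn_of_deriv_nonneg (convex_Icc 0 T)
    · apply ContinuousOn.mul
      · exact (Real.continuous_exp.comp (by continuity)).continuousOn
      · apply ContinuousOn.add
        apply ContinuousOn.add
        · exact hu_cont.sqrt
        · exact (Real.continuous_sqrt.continuousOn).const_smul c₂ |>.congr
            (fun x _ => by simp [smul_eq_mul])
        · exact (continuous_const.mul continuous_id).continuousOn
    · rw [interior_Icc]
      intro t ht
      exact (hFd t ht).differentiableAt.differentiableWithinAt
    · rw [interior_Icc]
      intro t ht
      rw [(hFd t ht).deriv]
      have ht0 : 0 < t := ht.1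
      have htT : t ∈ Set.Icc 0 T := ⟨le_of_lt ht0, le_of_lt ht.2⟩
      have hut : 0 < u t := hu_pos t htT
      set w := Real.sqrt (u t) with hw
      set s := Real.sqrt t with hs
      have hwpos : 0 < w := Real.sqrt_pos.mpr hut
      have hspos : 0 < s := Real.sqrt_pos.mpr ht0
      have hw2 : w ^ 2 = u t := Real.sq_sqrt hut.le
      have hepos : 0 < Real.exp (c₁ * t / 2) := Real.exp_pos _
      have hineq := hu_ineq t ht
      have hdiv : (-c₁ * u t - (c₂ / s + c₃) * w) / (2 * w) ≤ u' t / (2 * w) :=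
        div_le_div_of_nonneg_right hineq (by positivity) |>.trans_eq rfl
      have hq : (-c₁ * u t - (c₂ / s + c₃) * w) / (2 * w)
          = -(c₁ / 2) * w - c₂ * (1 / (2 * s)) - c₃ / 2 := by
        rw [← hw2]; field_simp; ring
      rw [hq] at hdiv
      have hQ : 0 ≤ (c₁ / 2) * (w + c₂ * s + c₃ / 2 * t)
          + (u' t / (2 * w) + c₂ * (1 / (2 * s)) + c₃ / 2) := by
        nlinarith [hdiv, mul_nonneg hc₁ (mul_nonneg hc₂ hspos.le),
          mul_nonneg hc₁ (mul_nonneg hc₃ ht0.le), mul_nonneg hc₁ hwpos.le]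
      have hFt : F' t = Real.exp (c₁ * t / 2) *
          ((c₁ / 2) * (w + c₂ * s + c₃ / 2 * t)
            + (u' t / (2 * w) + c₂ * (1 / (2 * s)) + c₃ / 2)) := by
        simp only [hF']; ring
      rw [hFt]
      exact mul_nonneg hepos.le hQ
  intro t ht
  have h0 : (0 : ℝ) ∈ Set.Icc 0 T := ⟨le_refl 0, hT.le⟩
  have hF0 : F 0 = Real.sqrt (u 0) := by simp [hF]
  have hmono := hFmono h0 ht ht.1
  rw [hF0] at hmono
  have hE : Real.exp (-c₁ * t / 2) * Real.exp (c₁ * t / 2) = 1 := by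
    rw [← Real.exp_add]; ring_nf; exact Real.exp_zero
  have hEpos : 0 < Real.exp (-c₁ * t / 2) := Real.exp_pos _
  have := mul_le_mul_of_nonneg_left hmono hEpos.le
  have hFt : Real.exp (-c₁ * t / 2) * F t
      = Real.sqrt (u t) + c₂ * Real.sqrt t + c₃ / 2 * t := by
    simp only [hF]; rw [← mul_assoc, hE, one_mul]
  nlinarith [this, hFt]
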